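/- Let $V$ be an irreducible finite-dimensional module over the Lie superalgebra $\mathfrak{h} \otimes A$, where $\mathfrak{h}$ is the standard Cartan subalgebra of $\mathfrak{q}(n)$, $n \geq 2$, and $A$ a commutative unital $\mathbb{C}$-algebra. If $I \subseteq A$ is an ideal with $(\mathfrak{h}_{\bar 0} \otimes I)V = 0$, then also $(\mathfrak{h}_{\bar 1} \otimes I)V = 0$. -/
import Mathlib


open Matrix

noncomputable section

variable (n : ℕ) (A : Type*) [CommRing A] [Algebra ℂ A]

/-- Square matrices of size `n+1` with entries in the commutative `ℂ`-algebra `A`. -/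
abbrev QMat := Matrix (Fin (n + 1)) (Fin (n + 1)) A

/-- The ambient space of pairs `(X, Y)` of matrices over `A`; a pair represents the
element of `𝔮(n) ⊗ A` with even component `X` and odd component `Y` (using the
identification of `𝔮(n) ⊗ A` with pairs of traceless `(n+1) × (n+1)` matrices over
`A`, where `(X, Y)` corresponds to the class of `[[X, Y], [Y, X]]`). -/
abbrev QPair := QMat n A × QMat n A

/-- `𝔮(n) ⊗ A`, realized as the space of pairs of traceless matrices over `A`. -/
def qA : Submodule ℂ (QPair n A) where
  carrier := {p | p.1.trace = 0 ∧ p.2.trace = 0}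
  add_mem' := by
    intro p q hp hq
    exact ⟨by simp [hp.1, hq.1], by simp [hp.2, hq.2]⟩
  zero_mem' := by simp
  smul_mem' := by
    intro c p hp
    exact ⟨by simp [hp.1], by simp [hp.2]⟩

/-- The Lie superbracket of `𝔮(n) ⊗ A` in the matrix-pair model: on even components it
is the commutator plus the anticommutator of the odd components (projected back to
traceless matrices), and on odd components it is given by the mixed commutators. -/
def qbr (p q : QPair n A) : QPair n A :=
  (p.1 * q.1 - q.1 * p.1 + p.2 * q.2 + q.2 * p.2 -
      (((n : ℂ) + 1)⁻¹ • (p.2 * q.2 + q.2 * p.2).trace) • (1 : QMat n A),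
    p.1 * q.2 - q.2 * p.1 + p.2 * q.1 - q.1 * p.2)

lemma qbr_mem (p q : QPair n A) : qbr n A p q ∈ qA n A := by
  have h1 : ((((n : ℂ) + 1)⁻¹ • (p.2 * q.2 + q.2 * p.2).trace) •
      (1 : QMat n A)).trace = (p.2 * q.2 + q.2 * p.2).trace := by
    rw [Matrix.trace_smul, Matrix.trace_one, smul_eq_mul, smul_mul_assoc]
    rw [show ((Fintype.card (Fin (n + 1)) : A)) = ((n + 1 : ℕ) : A) by simp]
    rw [← nsmul_eq_mul', ← Nat.cast_smul_eq_nsmul ℂ, smul_smul]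
    rw [show (((n + 1 : ℕ) : ℂ)) = (n : ℂ) + 1 by push_cast; ring]
    rw [inv_mul_cancel₀ (by
      exact_mod_cast Nat.cast_add_one_ne_zero (R := ℂ) n), one_smul]
  constructor
  · show (p.1 * q.1 - q.1 * p.1 + p.2 * q.2 + q.2 * p.2 -
      (((n : ℂ) + 1)⁻¹ • (p.2 * q.2 + q.2 * p.2).trace) • (1 : QMat n A)).trace = 0
    rw [Matrix.trace_sub, h1, Matrix.trace_add, Matrix.trace_add, Matrix.trace_sub,
      Matrix.trace_add, Matrix.trace_mul_comm p.1 q.1]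
    ring
  · show (p.1 * q.2 - q.2 * p.1 + p.2 * q.1 - q.1 * p.2).trace = 0
    rw [Matrix.trace_sub, Matrix.trace_add, Matrix.trace_sub,
      Matrix.trace_mul_comm p.1 q.2, Matrix.trace_mul_comm p.2 q.1]
    ring

/-- An element of the matrix-pair model is even if its odd component vanishes. -/
def IsEvenElt (p : QPair n A) : Prop := p.2 = 0

/-- An element of the matrix-pair model is odd if its even component vanishes. -/
def IsOddElt (p : QPair n A) : Prop := p.1 = 0

/-- Membership in `𝔥₀ ⊗ A`: even, with diagonal matrix component. -/
def InH0 (p : QPair n A) : Prop := p.2 = 0 ∧ p.1.IsDiag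

/-- Membership in `𝔥₁ ⊗ A`: odd, with diagonal matrix component. -/
def InH1 (p : QPair n A) : Prop := p.1 = 0 ∧ p.2.IsDiag

/-- Membership in `𝔥 ⊗ A`: both components diagonal. -/
def InH (p : QPair n A) : Prop := p.1.IsDiag ∧ p.2.IsDiag

/-- Membership in `𝔫⁺ ⊗ A`: both components strictly upper triangular. -/
def InNplus (p : QPair n A) : Prop :=
  ∀ i j : Fin (n + 1), j ≤ i → p.1 i j = 0 ∧ p.2 i j = 0

/-- Membership in `𝔮(n) ⊗ I` for an ideal `I ⊆ A`: all entries lie in `I`. -/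
def EntriesIn (I : Ideal A) (p : QPair n A) : Prop :=
  ∀ i j : Fin (n + 1), p.1 i j ∈ I ∧ p.2 i j ∈ I

/-- `𝔥₀ ⊗ A` as a subspace of the matrix-pair model of `𝔮(n) ⊗ A`: even diagonal
traceless pairs. -/
def h0A : Submodule ℂ (QPair n A) where
  carrier := {p | p.2 = 0 ∧ p.1.IsDiag ∧ p.1.trace = 0}
  add_mem' := by
    intro p q hp hq
    exact ⟨by simp [hp.1, hq.1], hp.2.1.add hq.2.1, by simp [hp.2.2, hq.2.2]⟩
  zero_mem' := ⟨rfl, Matrix.isDiag_zero, by simp⟩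
  smul_mem' := by
    intro c p hp
    exact ⟨by simp [hp.1], hp.2.1.smul c, by simp [hp.2.2]⟩

lemma h0A_le_qA : h0A n A ≤ qA n A := by
  intro p hp
  exact ⟨hp.2.2, by simp [hp.1]⟩

/-- The raw data of an action of `𝔮(n) ⊗ A` on a `ℤ₂`-graded vector space `M`: an
action map and the parity involution `P` of `M`. -/
structure QAct (M : Type*) [AddCommGroup M] [Module ℂ M] where
  act : ↥(qA n A) →ₗ[ℂ] M →ₗ[ℂ] M
  P : M →ₗ[ℂ] M

variable {M : Type*} [AddCommGroup M] [Module ℂ M]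

/-- The data `ρ` is a representation of the Lie superalgebra `𝔮(n) ⊗ A`: `P` is an
involution, commuting (resp. anticommuting) with the action of even (resp. odd)
elements, and the bracket acts by the supercommutator. -/
def QAct.IsRep (ρ : QAct n A M) : Prop :=
  (ρ.P ∘ₗ ρ.P = LinearMap.id) ∧
  (∀ x : ↥(qA n A), IsEvenElt n A ↑x → ρ.P ∘ₗ ρ.act x = ρ.act x ∘ₗ ρ.P) ∧
  (∀ x : ↥(qA n A), IsOddElt n A ↑x → ρ.P ∘ₗ ρ.act x = -(ρ.act x ∘ₗ ρ.P)) ∧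
  (∀ x y : ↥(qA n A), (IsEvenElt n A ↑x ∨ IsEvenElt n A ↑y) →
    ρ.act ⟨qbr n A ↑x ↑y, qbr_mem n A _ _⟩ = ρ.act x ∘ₗ ρ.act y - ρ.act y ∘ₗ ρ.act x) ∧
  (∀ x y : ↥(qA n A), IsOddElt n A ↑x → IsOddElt n A ↑y →
    ρ.act ⟨qbr n A ↑x ↑y, qbr_mem n A _ _⟩ = ρ.act x ∘ₗ ρ.act y + ρ.act y ∘ₗ ρ.act x)

/-- A graded submodule: stable under the action and under the parity involution. -/
def QAct.Invt (ρ : QAct n A M) (N : Submodule ℂ M) : Prop :=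
  (∀ x : ↥(qA n A), ∀ m ∈ N, ρ.act x m ∈ N) ∧ ∀ m ∈ N, ρ.P m ∈ N

/-- Irreducibility: `M ≠ 0` and the only graded invariant subspaces are `0`, `M`. -/
def QAct.Irred (ρ : QAct n A M) : Prop :=
  Nontrivial M ∧ ∀ N : Submodule ℂ M, QAct.Invt n A ρ N → N = ⊥ ∨ N = ⊤

/-- The `U(𝔮(n) ⊗ A)`-submodule of `M` generated by `v`: the smallest subspace
containing `v` and stable under the action. -/
def QAct.gen (ρ : QAct n A M) (v : M) : Submodule ℂ M :=
  sInf {N | v ∈ N ∧ ∀ x : ↥(qA n A), ∀ m ∈ N, ρ.act x m ∈ N}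

/-- `v` is a highest weight vector of `ρ` with highest weight `ψ : 𝔥₀ ⊗ A → ℂ`:
`v ≠ 0`, `v` generates `M` (i.e. `U(𝔮 ⊗ A)v = M`), `(𝔫⁺ ⊗ A)v = 0` and every element
of `𝔥₀ ⊗ A` acts on `v` by the scalar given by `ψ` (i.e. `U(𝔥₀ ⊗ A)v = ℂv`). -/
def QAct.IsHWVector (ρ : QAct n A M) (ψ : ↥(h0A n A) →ₗ[ℂ] ℂ) (v : M) : Prop :=
  v ≠ 0 ∧ QAct.gen n A ρ v = ⊤ ∧
  (∀ x : ↥(qA n A), InNplus n A ↑x → ρ.act x v = 0) ∧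
  (∀ (p : QPair n A) (hp : p ∈ h0A n A),
    ρ.act ⟨p, h0A_le_qA n A hp⟩ v = ψ ⟨p, hp⟩ • v)

/-- `ψ ∈ 𝓛(𝔥 ⊗ A)`: a functional on `𝔥₀ ⊗ A` vanishing on `𝔥₀ ⊗ I` for some
finite-codimensional ideal `I ⊆ A`. -/
def LFun (ψ : ↥(h0A n A) →ₗ[ℂ] ℂ) : Prop :=
  ∃ I : Ideal A, FiniteDimensional ℂ (A ⧸ I) ∧
    ∀ x : ↥(h0A n A), EntriesIn n A I ↑x → ψ x = 0

lemma IsDiag.mul_isDiag {X Y : QMat n A} (hX : X.IsDiag) (hY : Y.IsDiag) :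
    (X * Y).IsDiag := by
  intro i j hij
  rw [Matrix.mul_apply]
  apply Finset.sum_eq_zero
  intro k _
  by_cases hk : k = i
  · subst hk
    rw [hY hij, mul_zero]
  · rw [hX (Ne.symm hk), zero_mul]

/-- `𝔥 ⊗ A`, the Cartan subalgebra of `𝔮(n) ⊗ A` in the matrix-pair model: pairs of
traceless diagonal matrices over `A`. -/
def hA : Submodule ℂ (QPair n A) where
  carrier := {p | p.1.IsDiag ∧ p.2.IsDiag ∧ p.1.trace = 0 ∧ p.2.trace = 0}
  add_mem' := by
    intro p q hp hq
    exact ⟨hp.1.add hq.1, hp.2.1.add hq.2.1, by simp [hp.2.2.1, hq.2.2.1],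
      by simp [hp.2.2.2, hq.2.2.2]⟩
  zero_mem' := ⟨Matrix.isDiag_zero, Matrix.isDiag_zero, by simp, by simp⟩
  smul_mem' := by
    intro c p hp
    exact ⟨hp.1.smul c, hp.2.1.smul c, by simp [hp.2.2.1], by simp [hp.2.2.2]⟩

lemma hA_le_qA : hA n A ≤ qA n A := fun p hp => ⟨hp.2.2.1, hp.2.2.2⟩

lemma hbr_mem {p q : QPair n A} (hp : p ∈ hA n A) (hq : q ∈ hA n A) :
    qbr n A p q ∈ hA n A := by
  have h := qbr_mem n A p q
  obtain ⟨hp1, hp2, -, -⟩ := hp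
  obtain ⟨hq1, hq2, -, -⟩ := hq
  refine ⟨?_, ?_, h.1, h.2⟩
  · exact ((((IsDiag.mul_isDiag n A hp1 hq1).sub
      (IsDiag.mul_isDiag n A hq1 hp1)).add
      (IsDiag.mul_isDiag n A hp2 hq2)).add
      (IsDiag.mul_isDiag n A hq2 hp2)).sub (Matrix.isDiag_one.smul _)
  · exact (((IsDiag.mul_isDiag n A hp1 hq2).sub
      (IsDiag.mul_isDiag n A hq2 hp1)).add
      (IsDiag.mul_isDiag n A hp2 hq1)).sub (IsDiag.mul_isDiag n A hq1 hp2)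

lemma h0A_le_hA : h0A n A ≤ hA n A := by
  intro p hp
  exact ⟨hp.2.1, by simp [hp.1], hp.2.2, by simp [hp.1]⟩

/-- The raw data of an action of the Cartan subalgebra `𝔥 ⊗ A` on a `ℤ₂`-graded
vector space `M`: an action map and the parity involution of `M`. -/
structure HAct (M : Type*) [AddCommGroup M] [Module ℂ M] where
  act : ↥(hA n A) →ₗ[ℂ] M →ₗ[ℂ] M
  P : M →ₗ[ℂ] M

variable {M : Type*} [AddCommGroup M] [Module ℂ M]

/-- The data `ρ` is a representation of the Lie superalgebra `𝔥 ⊗ A`. -/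
def HAct.IsRep (ρ : HAct n A M) : Prop :=
  (ρ.P ∘ₗ ρ.P = LinearMap.id) ∧
  (∀ x : ↥(hA n A), IsEvenElt n A ↑x → ρ.P ∘ₗ ρ.act x = ρ.act x ∘ₗ ρ.P) ∧
  (∀ x : ↥(hA n A), IsOddElt n A ↑x → ρ.P ∘ₗ ρ.act x = -(ρ.act x ∘ₗ ρ.P)) ∧
  (∀ x y : ↥(hA n A), (IsEvenElt n A ↑x ∨ IsEvenElt n A ↑y) →
    ρ.act ⟨qbr n A ↑x ↑y, hbr_mem n A x.2 y.2⟩ = ρ.act x ∘ₗ ρ.act y - ρ.act y ∘ₗ ρ.act x) ∧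
  (∀ x y : ↥(hA n A), IsOddElt n A ↑x → IsOddElt n A ↑y →
    ρ.act ⟨qbr n A ↑x ↑y, hbr_mem n A x.2 y.2⟩ = ρ.act x ∘ₗ ρ.act y + ρ.act y ∘ₗ ρ.act x)

/-- A graded subspace of an `𝔥 ⊗ A`-module, stable under the action and parity. -/
def HAct.Invt (ρ : HAct n A M) (N : Submodule ℂ M) : Prop :=
  (∀ x : ↥(hA n A), ∀ m ∈ N, ρ.act x m ∈ N) ∧ ∀ m ∈ N, ρ.P m ∈ N

/-- Irreducibility of an `𝔥 ⊗ A`-module. -/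
def HAct.Irred (ρ : HAct n A M) : Prop :=
  Nontrivial M ∧ ∀ N : Submodule ℂ M, HAct.Invt n A ρ N → N = ⊥ ∨ N = ⊤

lemma mul_entries_left' (I : Ideal A) {X : QMat n A} (Y : QMat n A)
    (hX : ∀ i j, X i j ∈ I) (i j : Fin (n + 1)) : (X * Y) i j ∈ I := by
  rw [Matrix.mul_apply]
  exact Ideal.sum_mem I fun k _ => Ideal.mul_mem_right _ _ (hX i k)

lemma mul_entries_right' (I : Ideal A) {X : QMat n A} (Y : QMat n A)
    (hX : ∀ i j, X i j ∈ I) (i j : Fin (n + 1)) : (Y * X) i j ∈ I := by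
  rw [Matrix.mul_apply]
  exact Ideal.sum_mem I fun k _ => Ideal.mul_mem_left _ _ (hX k j)

lemma diag_mul_comm {X Y : QMat n A} (hX : X.IsDiag) (hY : Y.IsDiag) :
    X * Y = Y * X := by
  ext i j
  rw [Matrix.mul_apply, Matrix.mul_apply]
  refine Finset.sum_congr rfl fun k _ => ?_
  by_cases hki : k = i
  · subst hki
    by_cases hkj : k = j
    · subst hkj; exact mul_comm _ _
    · simp [hY hkj, hX hkj]
  · have h : i ≠ k := fun h => hki h.symm
    rw [hX h, hY h, zero_mul, zero_mul]

lemma entriesIn_qbr_left (I : Ideal A) (p q : QPair n A)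
    (hp : EntriesIn n A I p) : EntriesIn n A I (qbr n A p q) := by
  have h1 : ∀ i j, p.1 i j ∈ I := fun i j => (hp i j).1
  have h2 : ∀ i j, p.2 i j ∈ I := fun i j => (hp i j).2
  have ht : (p.2 * q.2 + q.2 * p.2).trace ∈ I := by
    unfold Matrix.trace
    refine Ideal.sum_mem I fun k _ => ?_
    rw [Matrix.diag_apply, Matrix.add_apply]
    exact I.add_mem (mul_entries_left' n A I _ h2 k k)
      (mul_entries_right' n A I _ h2 k k)
  intro i j
  constructor
  · show (p.1 * q.1 - q.1 * p.1 + p.2 * q.2 + q.2 * p.2 -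
      (((n : ℂ) + 1)⁻¹ • (p.2 * q.2 + q.2 * p.2).trace) • (1 : QMat n A)) i j ∈ I
    rw [Matrix.sub_apply, Matrix.add_apply, Matrix.add_apply, Matrix.sub_apply,
      Matrix.smul_apply, smul_eq_mul]
    refine I.sub_mem (I.add_mem (I.add_mem (I.sub_mem ?_ ?_) ?_) ?_) ?_
    · exact mul_entries_left' n A I _ h1 i j
    · exact mul_entries_right' n A I _ h1 i j
    · exact mul_entries_left' n A I _ h2 i j
    · exact mul_entries_right' n A I _ h2 i j
    · exact Ideal.mul_mem_right _ _ (Submodule.smul_of_tower_mem I _ ht)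
  · show (p.1 * q.2 - q.2 * p.1 + p.2 * q.1 - q.1 * p.2) i j ∈ I
    rw [Matrix.sub_apply, Matrix.add_apply, Matrix.sub_apply]
    refine I.sub_mem (I.add_mem (I.sub_mem ?_ ?_) ?_) ?_
    · exact mul_entries_left' n A I _ h1 i j
    · exact mul_entries_right' n A I _ h1 i j
    · exact mul_entries_left' n A I _ h2 i j
    · exact mul_entries_right' n A I _ h2 i j

/-- Let `V` be an irreducible finite-dimensional module over `𝔥 ⊗ A`, where `𝔥` is the
standard Cartan subalgebra of `𝔮(n)`, `n ≥ 2`.  If `I ⊆ A` is an ideal with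
`(𝔥₀ ⊗ I) V = 0`, then also `(𝔥₁ ⊗ I) V = 0`. -/
theorem odd_ideal_annihilates_of_even (hn : 2 ≤ n)
    [FiniteDimensional ℂ M] (ρ : HAct n A M)
    (hrep : HAct.IsRep n A ρ) (hirr : HAct.Irred n A ρ)
    (I : Ideal A)
    (heven : ∀ x : ↥(hA n A), InH0 n A ↑x → EntriesIn n A I ↑x → ρ.act x = 0) :
    ∀ x : ↥(hA n A), InH1 n A ↑x → EntriesIn n A I ↑x → ρ.act x = 0 := by
  intro x hx hxI
  obtain ⟨hP2, hPe, hPo, hbre, hbro⟩ := hrep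
  -- Brackets of `x` with odd elements act by zero, since they lie in `𝔥₀ ⊗ I`.
  have key : ∀ y : ↥(hA n A), (↑y : QPair n A).1 = 0 →
      ρ.act x ∘ₗ ρ.act y + ρ.act y ∘ₗ ρ.act x = 0 := by
    intro y hy1
    rw [← hbro x y hx.1 hy1]
    refine heven _ ?_ (entriesIn_qbr_left n A I _ _ hxI)
    obtain ⟨hd1, -, -, -⟩ := hbr_mem n A x.2 y.2
    exact ⟨by simp [qbr, hx.1, hy1], hd1⟩
  -- `act x` squares to zero.
  have hsq : ρ.act x ∘ₗ ρ.act x = 0 := by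
    have h2 : (2 : ℂ) • (ρ.act x ∘ₗ ρ.act x) = 0 := by
      rw [two_smul]; exact key x hx.1
    exact (smul_eq_zero.mp h2).resolve_left (by norm_num)
  -- The kernel of `act x` is a graded invariant subspace.
  have hker : HAct.Invt n A ρ (LinearMap.ker (ρ.act x)) := by
    constructor
    · intro y m hm
      have hm0 : ρ.act x m = 0 := hm
      obtain ⟨hy1, hy2, hy3, hy4⟩ := y.2
      have hye : (((↑y : QPair n A).1, 0) : QPair n A) ∈ hA n A :=
        ⟨hy1, Matrix.isDiag_zero, hy3, by simp⟩
      have hyo : ((0, (↑y : QPair n A).2) : QPair n A) ∈ hA n A :=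
        ⟨Matrix.isDiag_zero, hy2, by simp, hy4⟩
      have hysum : y = (⟨_, hye⟩ : ↥(hA n A)) + ⟨_, hyo⟩ := by
        apply Subtype.ext
        show (↑y : QPair n A) = ((↑y : QPair n A).1, 0) + (0, (↑y : QPair n A).2)
        exact Prod.ext (by simp) (by simp)
      have he : ρ.act x (ρ.act (⟨_, hye⟩ : ↥(hA n A)) m) = 0 := by
        have hb := hbre ⟨_, hye⟩ x (Or.inl rfl)
        have hz : (⟨qbr n A _ ↑x, hbr_mem n A hye x.2⟩ : ↥(hA n A)) = 0 := by
          apply Subtype.ext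
          show qbr n A ((↑y : QPair n A).1, 0) ↑x = 0
          have hc : (↑y : QPair n A).1 * (↑x : QPair n A).2 =
              (↑x : QPair n A).2 * (↑y : QPair n A).1 := diag_mul_comm n A hy1 hx.2
          refine Prod.ext ?_ ?_
          · simp [qbr, hx.1]
          · simp [qbr, hx.1, hc]
        rw [hz, map_zero] at hb
        have hcomm := LinearMap.congr_fun hb.symm m
        simp only [LinearMap.sub_apply, LinearMap.comp_apply, LinearMap.zero_apply] at hcomm
        have heq : ρ.act (⟨_, hye⟩ : ↥(hA n A)) (ρ.act x m) =
            ρ.act x (ρ.act (⟨_, hye⟩ : ↥(hA n A)) m) := sub_eq_zero.mp hcomm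
        rw [← heq, hm0, map_zero]
      have ho : ρ.act x (ρ.act (⟨_, hyo⟩ : ↥(hA n A)) m) = 0 := by
        have hb := LinearMap.congr_fun (key ⟨_, hyo⟩ rfl) m
        simp only [LinearMap.add_apply, LinearMap.comp_apply, LinearMap.zero_apply] at hb
        rw [hm0, map_zero, add_zero] at hb
        exact hb
      show ρ.act x (ρ.act y m) = 0
      rw [hysum, map_add, LinearMap.add_apply, map_add, he, ho, add_zero]
    · intro m hm
      have hm0 : ρ.act x m = 0 := hm
      have hb := LinearMap.congr_fun (hPo x hx.1) m
      simp only [LinearMap.comp_apply, LinearMap.neg_apply] at hb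
      show ρ.act x (ρ.P m) = 0
      rw [hm0, map_zero] at hb
      exact (neg_eq_zero.mp hb.symm)
  rcases hirr.2 _ hker with h | h
  · ext m
    have h2 : ρ.act x m ∈ LinearMap.ker (ρ.act x) := by
      show ρ.act x (ρ.act x m) = 0
      exact LinearMap.congr_fun hsq m
    rw [h] at h2
    simpa using h2
  · ext m
    have h2 : m ∈ LinearMap.ker (ρ.act x) := h ▸ Submodule.mem_top
    simpa using h2
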